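/- Let C be a category with finite products and x, u, y, v objects of C. For every object c and morphisms α : x ⟶ c ⨯ y, β : c ⨯ v ⟶ u, one has the equality of classes ⟨α, β | c⟩ = ⟨prod.lift (𝟙 x) (α ≫ prod.snd), prod.map (α ≫ prod.fst) (𝟙 v) ≫ β | x⟩ in Lens((x,u),(y,v)); that is, every cartesian lens can be expressed in get/put normal form with get := α ≫ prod.snd and put := prod.map (α ≫ prod.fst) (𝟙 v) ≫ β. -/

import Mathlib

open CategoryTheory CategoryTheory.Limits

variable {C : Type*} [Category C] [HasFiniteProducts C]

/-- Representatives of cartesian lenses from `(x,u)` to `(y,v)`. -/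
def LensRep (x u y v : C) : Type _ :=
  Σ c : C, (x ⟶ c ⨯ y) × (c ⨯ v ⟶ u)

/-- The coend relation: for `f : n ⟶ c`, `α : x ⟶ n ⨯ y`, `β : c ⨯ v ⟶ u`,
`(c, α ≫ prod.map f (𝟙 y), β)` is related to `(n, α, prod.map f (𝟙 v) ≫ β)`. -/
def LensRel (x u y v : C) : LensRep x u y v → LensRep x u y v → Prop :=
  fun A B => ∃ f : B.1 ⟶ A.1,
    A.2.1 = B.2.1 ≫ prod.map f (𝟙 y) ∧ B.2.2 = prod.map f (𝟙 v) ≫ A.2.2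

/-- The lens coend `Lens((x,u),(y,v))`. -/
def Lens (x u y v : C) : Type _ := Quot (LensRel x u y v)

/-- Every cartesian lens `⟨α, β | c⟩` equals its get/put normal form
`⟨prod.lift (𝟙 x) get, put | x⟩` with `get := α ≫ prod.snd` and
`put := prod.map (α ≫ prod.fst) (𝟙 v) ≫ β`. -/
theorem lens_normal_form (x u y v : C) (c : C) (α : x ⟶ c ⨯ y) (β : c ⨯ v ⟶ u) :
    Quot.mk (LensRel x u y v) ⟨c, α, β⟩ =
      Quot.mk (LensRel x u y v)
        ⟨x, prod.lift (𝟙 x) (α ≫ prod.snd), prod.map (α ≫ prod.fst) (𝟙 v) ≫ β⟩ := by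
  apply Quot.sound
  refine ⟨α ≫ prod.fst, ?_, rfl⟩
  ext <;> simp
  · exact (prod.lift_fst _ _).symm
  · exact (prod.lift_snd _ _).symm
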